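/- Let N ≥ 1 and let d, d_1, …, d_N, ρ_1, …, ρ_N be natural numbers satisfying the interleaving 0 ≤ d_1 < ρ_N ≤ d_2 < ρ_{N−1} ≤ d_3 < ⋯ ≤ d_N < ρ_1 ≤ d, and set m := d + (d_1+⋯+d_N) − (ρ_1+⋯+ρ_N). Then there is at most one (N+1)-dimensional ℂ-linear subspace V of the space of complex polynomials of degree at most d such that: (i) the set of degrees of nonzero elements of V is exactly {d_1, …, d_N, d}; (ii) the set of root multiplicities at 0 of nonzero elements of V is exactly {0, ρ_N, ρ_{N−1}, …, ρ_1}; and (iii) V contains a nonzero polynomial whose root multiplicity at −1 is at least m+N. -/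

import Mathlib

open Polynomial

/-- A nonzero polynomial with `n` terms has root multiplicity `< n` at any nonzero point. -/
lemma sparse_rootMultiplicity_lt (a : ℂ) (ha : a ≠ 0) :
    ∀ n : ℕ, ∀ f : Polynomial ℂ, f.support.card ≤ n → f ≠ 0 →
      rootMultiplicity a f < f.support.card := by
  intro n
  induction n with
  | zero =>
    intro f hcard hf
    exfalso
    exact hf (Polynomial.support_eq_empty.mp (Finset.card_eq_zero.mp (Nat.le_zero.mp hcard)))
  | succ n ih =>
    intro f hcard hf
    have hcardpos : 0 < f.support.card := Finset.card_pos.mpr (nonempty_support_iff.mpr hf)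
    by_cases hM : rootMultiplicity a f = 0
    · omega
    have hroot : f.IsRoot a := by
      by_contra hr
      exact hM (rootMultiplicity_eq_zero hr)
    set v := f.natTrailingDegree with hv
    set h : Polynomial ℂ := C (v : ℂ) * f - X * derivative f with hh
    have hco : ∀ j : ℕ, h.coeff j = ((v : ℂ) - (j : ℂ)) * f.coeff j := by
      intro j
      rcases j with _ | j
      · simp [hh]
      · simp [hh, coeff_X_mul, coeff_derivative]
        ring
    have hsupp : h.support ⊆ f.support.erase v := by
      intro j hj
      rw [mem_support_iff] at hj
      rw [hco] at hj
      have h1 : f.coeff j ≠ 0 := fun h0 => hj (by rw [h0, mul_zero])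
      have h2 : j ≠ v := by
        rintro rfl
        simp at hj
      exact Finset.mem_erase.mpr ⟨h2, mem_support_iff.mpr h1⟩
    have hvmem : v ∈ f.support := by
      rw [mem_support_iff]
      exact trailingCoeff_nonzero_iff_nonzero.mpr hf
    have hcards : h.support.card < f.support.card := by
      calc h.support.card ≤ (f.support.erase v).card := Finset.card_le_card hsupp
        _ < f.support.card := Finset.card_erase_lt_of_mem hvmem
    have hne : h ≠ 0 := by
      intro h0
      -- then f is a monomial, so a is not a root
      have hmono : ∀ j, j ≠ v → f.coeff j = 0 := by
        intro j hj
        have := hco j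
        rw [h0, coeff_zero] at this
        have hvj : ((v:ℂ) - (j:ℂ)) ≠ 0 := by
          intro hc
          apply hj
          exact_mod_cast (sub_eq_zero.mp hc).symm
        exact (mul_eq_zero.mp this.symm).resolve_left hvj
      have : f = C f.trailingCoeff * X ^ v := by
        ext j
        by_cases hj : j = v
        · subst hj; simp [trailingCoeff, coeff_C_mul, coeff_X_pow, hv]
        · simp [hmono j hj, coeff_C_mul, coeff_X_pow, hj]
      rw [IsRoot, this] at hroot
      simp at hroot
      rcases hroot with h1 | h2
      · exact hf (by simpa [trailingCoeff_nonzero_iff_nonzero] using h1)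
      · exact ha h2.1
    -- divisibility
    have hdvd : (X - C a) ^ (rootMultiplicity a f - 1) ∣ h := by
      apply dvd_sub
      · exact Dvd.dvd.mul_left ((pow_dvd_pow _ (Nat.sub_le _ _)).trans
          (pow_rootMultiplicity_dvd f a)) _
      · apply Dvd.dvd.mul_left
        rw [← derivative_rootMultiplicity_of_root hroot]
        exact pow_rootMultiplicity_dvd _ a
    have hle : rootMultiplicity a f - 1 ≤ rootMultiplicity a h :=
      (le_rootMultiplicity_iff hne).mpr hdvd
    have hih := ih h (by omega) hne
    omega

lemma finrank_le_card_of_coeff_witness (W : Submodule ℂ (Polynomial ℂ)) (S : Finset ℕ)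
    (h : ∀ f ∈ W, f ≠ 0 → ∃ s ∈ S, f.coeff s ≠ 0) :
    Module.finrank ℂ W ≤ S.card := by
  let L : W →ₗ[ℂ] (S → ℂ) :=
    { toFun := fun f s => (f : Polynomial ℂ).coeff s
      map_add' := by intro x y; ext s; simp
      map_smul' := by intro c x; ext s; simp }
  have hinj : Function.Injective L := by
    rw [← LinearMap.ker_eq_bot, Submodule.eq_bot_iff]
    intro f hf
    by_contra hne
    have hf0 : (f : Polynomial ℂ) ≠ 0 := by
      simpa [Submodule.coe_eq_zero] using hne
    obtain ⟨s, hs, hcs⟩ := h f f.2 hf0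
    apply hcs
    have := congrFun hf ⟨s, hs⟩
    simpa [L] using this
  calc Module.finrank ℂ W ≤ Module.finrank ℂ (S → ℂ) :=
        LinearMap.finrank_le_finrank_of_injective hinj
    _ = S.card := by simp [Module.finrank_pi]

lemma coeff_winsum (T : Finset ℕ) (c : ℕ → ℂ) (t : ℕ) :
    (∑ j ∈ T, monomial j (c j)).coeff t = if t ∈ T then c t else 0 := by
  rw [finset_sum_coeff]
  simp only [coeff_monomial]
  exact Finset.sum_ite_eq' T t c

lemma space_structure (N d : ℕ) (D σ : Fin (N+1) → ℕ)
    (hσD : ∀ i, σ i ≤ D i)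
    (hwin : ∀ i j : Fin (N+1), i < j → D i < σ j)
    (hDd : ∀ i, D i ≤ d)
    (Dmono : StrictMono D) (σmono : StrictMono σ)
    (mN : ℕ) (hcardS : ∑ i : Fin (N+1), (D i + 1 - σ i) = mN + 1)
    (V : Submodule ℂ (Polynomial ℂ))
    (hdeg : V ≤ degreeLE ℂ (d : WithBot ℕ))
    (hrank : Module.finrank ℂ V = N + 1)
    (hdset : ∀ g ∈ V, g ≠ 0 → g.natDegree ∈ Set.range D)
    (hρset : ∀ g ∈ V, g ≠ 0 → g.natTrailingDegree ∈ Set.range σ)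
    (p : Polynomial ℂ) (hpV : p ∈ V) (hp0 : p ≠ 0)
    (hpm : mN ≤ rootMultiplicity (-1) p) :
    V = Submodule.span ℂ (Set.range fun i : Fin (N+1) =>
      ∑ j ∈ Finset.Icc (σ i) (D i), monomial j (p.coeff j)) := by
  classical
  haveI hFDle : FiniteDimensional ℂ (degreeLE ℂ (d : WithBot ℕ)) := by
    rw [degreeLE_eq_span_X_pow]
    exact FiniteDimensional.span_of_finite ℂ (Finset.finite_toSet _)
  haveI hFD : FiniteDimensional ℂ V := Submodule.finiteDimensional_of_le hdeg
  -- truncation maps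
  let trunc : Finset ℕ → (V →ₗ[ℂ] Polynomial ℂ) := fun T =>
    { toFun := fun f => ∑ j ∈ T, monomial j ((f : Polynomial ℂ).coeff j)
      map_add' := by
        intro x y
        simp [Finset.sum_add_distrib]
      map_smul' := by
        intro cc x
        simp [Polynomial.coeff_smul, Finset.smul_sum, Polynomial.smul_monomial] }
  have htrunc0 : ∀ (T : Finset ℕ) (f : V), trunc T f = 0 ↔
      ∀ j ∈ T, (f : Polynomial ℂ).coeff j = 0 := by
    intro T f
    constructor
    · intro h0 j hj
      have h2 : (∑ k ∈ T, monomial k ((f : Polynomial ℂ).coeff k)).coeff j = 0 := by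
        rw [show (∑ k ∈ T, monomial k ((f : Polynomial ℂ).coeff k)) = trunc T f from rfl, h0,
          coeff_zero]
      rw [coeff_winsum] at h2
      simpa [hj] using h2
    · intro hall
      show (∑ j ∈ T, monomial j ((f : Polynomial ℂ).coeff j)) = 0
      apply Finset.sum_eq_zero
      intro j hj
      rw [hall j hj, monomial_zero_right]
  -- existence of adapted elements
  have hexists : ∀ i : Fin (N+1), ∃ e : V, e ≠ 0 ∧
      (∀ j ∈ Finset.Ioc (D i) d, (e : Polynomial ℂ).coeff j = 0) ∧
      (∀ j ∈ Finset.range (σ i), (e : Polynomial ℂ).coeff j = 0) := by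
    intro i
    set φ := trunc (Finset.Ioc (D i) d) with hφ
    set ψ := trunc (Finset.range (σ i)) with hψ
    have hrφ : Module.finrank ℂ (LinearMap.range φ) ≤ N - i := by
      refine le_trans (finrank_le_card_of_coeff_witness _ ((Finset.Ioi i).image D) ?_) ?_
      · rintro g hg hg0
        obtain ⟨f, rfl⟩ := LinearMap.mem_range.mp hg
        have hgco : ∀ j, (φ f).coeff j =
            if j ∈ Finset.Ioc (D i) d then (f : Polynomial ℂ).coeff j else 0 := by
          intro j
          show (∑ k ∈ Finset.Ioc (D i) d,
            monomial k ((f : Polynomial ℂ).coeff k)).coeff j = _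
          rw [coeff_winsum]
        have hf0 : (f : Polynomial ℂ) ≠ 0 := by
          rintro hf0
          apply hg0
          show (∑ j ∈ Finset.Ioc (D i) d, monomial j ((f : Polynomial ℂ).coeff j)) = 0
          apply Finset.sum_eq_zero; intro j hj; rw [hf0]; simp
        have hndle : (f : Polynomial ℂ).natDegree ≤ d :=
          natDegree_le_iff_degree_le.mpr (mem_degreeLE.1 (hdeg f.2))
        have hgt : D i < (f : Polynomial ℂ).natDegree := by
          by_contra hle
          push_neg at hle
          apply hg0
          show (∑ j ∈ Finset.Ioc (D i) d, monomial j ((f : Polynomial ℂ).coeff j)) = 0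
          apply Finset.sum_eq_zero; intro j hj
          rw [coeff_eq_zero_of_natDegree_lt (lt_of_le_of_lt hle (Finset.mem_Ioc.mp hj).1)]
          simp
        obtain ⟨k, hk⟩ := hdset f f.2 hf0
        refine ⟨(f : Polynomial ℂ).natDegree, ?_, ?_⟩
        · exact Finset.mem_image.mpr ⟨k, Finset.mem_Ioi.mpr (Dmono.lt_iff_lt.mp (hk ▸ hgt)), hk⟩
        · rw [hgco, if_pos (Finset.mem_Ioc.mpr ⟨hgt, hndle⟩)]
          exact leadingCoeff_ne_zero.mpr hf0
      · calc ((Finset.Ioi i).image D).card ≤ (Finset.Ioi i).card := Finset.card_image_le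
          _ = N - i := by rw [Fin.card_Ioi]; omega
    have hrψ : Module.finrank ℂ (LinearMap.range ψ) ≤ (i : ℕ) := by
      refine le_trans (finrank_le_card_of_coeff_witness _ ((Finset.Iio i).image σ) ?_) ?_
      · rintro g hg hg0
        obtain ⟨f, rfl⟩ := LinearMap.mem_range.mp hg
        have hgco : ∀ j, (ψ f).coeff j =
            if j ∈ Finset.range (σ i) then (f : Polynomial ℂ).coeff j else 0 := by
          intro j
          show (∑ k ∈ Finset.range (σ i),
            monomial k ((f : Polynomial ℂ).coeff k)).coeff j = _
          rw [coeff_winsum]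
        have hf0 : (f : Polynomial ℂ) ≠ 0 := by
          rintro hf0
          apply hg0
          show (∑ j ∈ Finset.range (σ i), monomial j ((f : Polynomial ℂ).coeff j)) = 0
          apply Finset.sum_eq_zero; intro j hj; rw [hf0]; simp
        have hlow : ∃ j, j < σ i ∧ (f : Polynomial ℂ).coeff j ≠ 0 := by
          by_contra hno
          push_neg at hno
          apply hg0
          show (∑ j ∈ Finset.range (σ i), monomial j ((f : Polynomial ℂ).coeff j)) = 0
          apply Finset.sum_eq_zero; intro j hj
          rw [hno j (Finset.mem_range.mp hj)]; simp
        obtain ⟨j0, hj0lt, hj0ne⟩ := hlow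
        have htd : (f : Polynomial ℂ).natTrailingDegree < σ i :=
          lt_of_le_of_lt (natTrailingDegree_le_of_ne_zero hj0ne) hj0lt
        obtain ⟨k, hk⟩ := hρset f f.2 hf0
        refine ⟨(f : Polynomial ℂ).natTrailingDegree, ?_, ?_⟩
        · exact Finset.mem_image.mpr ⟨k, Finset.mem_Iio.mpr (σmono.lt_iff_lt.mp (hk ▸ htd)), hk⟩
        · rw [hgco, if_pos (Finset.mem_range.mpr htd)]
          exact trailingCoeff_nonzero_iff_nonzero.mpr hf0
      · calc ((Finset.Iio i).image σ).card ≤ (Finset.Iio i).card := Finset.card_image_le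
          _ = (i : ℕ) := by rw [Fin.card_Iio]
    have hkφ := LinearMap.finrank_range_add_finrank_ker φ
    have hkψ := LinearMap.finrank_range_add_finrank_ker ψ
    rw [hrank] at hkφ hkψ
    have hsupinf := Submodule.finrank_sup_add_finrank_inf_eq (LinearMap.ker φ) (LinearMap.ker ψ)
    have hsuple : Module.finrank ℂ ((LinearMap.ker φ) ⊔ (LinearMap.ker ψ) : Submodule ℂ V)
        ≤ N + 1 := hrank ▸ Submodule.finrank_le _
    have hile : (i : ℕ) ≤ N := Nat.lt_succ_iff.mp i.isLt
    have hinfpos : 0 < Module.finrank ℂ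
        ((LinearMap.ker φ ⊓ LinearMap.ker ψ : Submodule ℂ V)) := by omega
    have hnebot : (LinearMap.ker φ ⊓ LinearMap.ker ψ : Submodule ℂ V) ≠ ⊥ := by
      intro hbot
      rw [hbot] at hinfpos
      simp at hinfpos
    obtain ⟨e, he, he0⟩ := Submodule.exists_mem_ne_zero_of_ne_bot hnebot
    refine ⟨e, he0, ?_, ?_⟩
    · exact (htrunc0 _ e).mp (LinearMap.mem_ker.mp (Submodule.mem_inf.mp he).1)
    · exact (htrunc0 _ e).mp (LinearMap.mem_ker.mp (Submodule.mem_inf.mp he).2)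
  choose e he0 heHigh heLow using hexists
  set E : Fin (N+1) → Polynomial ℂ := fun i => ((e i : V) : Polynomial ℂ) with hE
  have hE0 : ∀ i, E i ≠ 0 := by
    intro i hEi
    exact he0 i (Subtype.ext hEi)
  have hEwinout : ∀ i j, j ∉ Finset.Icc (σ i) (D i) → (E i).coeff j = 0 := by
    intro i j hj
    rw [Finset.mem_Icc] at hj
    push_neg at hj
    by_cases hlow : j < σ i
    · exact heLow i j (Finset.mem_range.mpr hlow)
    · push_neg at hlow
      have hgt : D i < j := hj hlow
      by_cases hle : j ≤ d
      · exact heHigh i j (Finset.mem_Ioc.mpr ⟨hgt, hle⟩)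
      · push_neg at hle
        apply coeff_eq_zero_of_natDegree_lt
        exact lt_of_le_of_lt (natDegree_le_iff_degree_le.mpr (mem_degreeLE.1 (hdeg (e i).2))) hle
  have hcross : ∀ i k j, k ≠ i → j ∈ Finset.Icc (σ i) (D i) → (E k).coeff j = 0 := by
    intro i k j hki hj
    rw [Finset.mem_Icc] at hj
    apply hEwinout
    rw [Finset.mem_Icc]
    intro hcon
    rcases lt_or_gt_of_ne hki with h | h
    · have h1 := hwin k i h
      omega
    · have h1 := hwin i k h
      omega
  have htmem : ∀ i, (E i).natTrailingDegree ∈ Finset.Icc (σ i) (D i) := by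
    intro i
    rw [Finset.mem_Icc]
    constructor
    · by_contra hlt
      push_neg at hlt
      exact trailingCoeff_nonzero_iff_nonzero.mpr (hE0 i)
        (hEwinout i _ (by rw [Finset.mem_Icc]; omega))
    · refine le_trans (natTrailingDegree_le_natDegree (E i)) ?_
      rw [natDegree_le_iff_coeff_eq_zero]
      intro M hM
      exact hEwinout i M (by rw [Finset.mem_Icc]; omega)
  have hLI : LinearIndependent ℂ e := by
    rw [Fintype.linearIndependent_iff]
    intro g hg i
    have hg' : (∑ k, g k • E k) = 0 := by
      have h2 := congrArg (V.subtype) hg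
      simpa [hE] using h2
    have ht := congrArg (fun q => Polynomial.coeff q ((E i).natTrailingDegree)) hg'
    simp only [finset_sum_coeff, coeff_smul, smul_eq_mul, coeff_zero] at ht
    rw [Finset.sum_eq_single i] at ht
    · rcases mul_eq_zero.mp ht with h1 | h2
      · exact h1
      · exact absurd h2 (trailingCoeff_nonzero_iff_nonzero.mpr (hE0 i))
    · intro k _ hk
      rw [hcross i k _ hk (htmem i), mul_zero]
    · intro hcon
      exact absurd (Finset.mem_univ i) hcon
  have hcardeq : Fintype.card (Fin (N+1)) = Module.finrank ℂ V := by
    simp [hrank]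
  let B := basisOfLinearIndependentOfCardEqFinrank hLI hcardeq
  have hB : ⇑B = e := coe_basisOfLinearIndependentOfCardEqFinrank hLI hcardeq
  set pv : V := ⟨p, hpV⟩ with hpv
  set c : Fin (N+1) → ℂ := fun i => B.repr pv i with hc
  have hsum : (∑ i, c i • e i) = pv := by
    conv_lhs => rw [← hB]
    exact B.sum_repr pv
  have hpsum : p = ∑ i, c i • E i := by
    have h2 := congrArg (V.subtype) hsum
    simp only [map_sum, map_smul] at h2
    exact h2.symm
  have hpcoeff : ∀ j, p.coeff j = ∑ i, c i * (E i).coeff j := by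
    intro j
    rw [hpsum]
    simp [finset_sum_coeff, coeff_smul]
  have hcne : ∀ i, c i ≠ 0 := by
    intro i0 hci0
    have hsupp : p.support ⊆ (Finset.univ.erase i0).biUnion
        (fun i => Finset.Icc (σ i) (D i)) := by
      intro j hj
      rw [mem_support_iff, hpcoeff j] at hj
      obtain ⟨i, _, hne⟩ := Finset.exists_ne_zero_of_sum_ne_zero hj
      have hii0 : i ≠ i0 := by
        rintro rfl
        rw [hci0, zero_mul] at hne
        exact hne rfl
      have hEj : (E i).coeff j ≠ 0 := by
        intro h0
        rw [h0, mul_zero] at hne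
        exact hne rfl
      have hjwin : j ∈ Finset.Icc (σ i) (D i) := by
        by_contra hcon
        exact hEj (hEwinout i j hcon)
      exact Finset.mem_biUnion.mpr ⟨i, Finset.mem_erase.mpr ⟨hii0, Finset.mem_univ i⟩, hjwin⟩
    have hcard1 : p.support.card ≤ mN := by
      calc p.support.card ≤ ((Finset.univ.erase i0).biUnion
            (fun i => Finset.Icc (σ i) (D i))).card := Finset.card_le_card hsupp
        _ ≤ ∑ i ∈ Finset.univ.erase i0, (Finset.Icc (σ i) (D i)).card :=
            Finset.card_biUnion_le
        _ = ∑ i ∈ Finset.univ.erase i0, (D i + 1 - σ i) := by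
            apply Finset.sum_congr rfl
            intro k _
            rw [Nat.card_Icc]
        _ ≤ mN := by
            have hadd : (D i0 + 1 - σ i0) + ∑ i ∈ Finset.univ.erase i0, (D i + 1 - σ i)
                = ∑ i : Fin (N+1), (D i + 1 - σ i) :=
              Finset.add_sum_erase Finset.univ (fun i => D i + 1 - σ i) (Finset.mem_univ i0)
            rw [hcardS] at hadd
            have hwin0 : 1 ≤ D i0 + 1 - σ i0 := by
              have := hσD i0
              omega
            omega
    have := sparse_rootMultiplicity_lt (-1) (by norm_num) p.support.card p le_rfl hp0
    omega
  have hwinpart : ∀ i, (∑ j ∈ Finset.Icc (σ i) (D i), monomial j (p.coeff j)) = c i • E i := by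
    intro i
    ext j
    rw [coeff_winsum, coeff_smul, smul_eq_mul]
    by_cases hj : j ∈ Finset.Icc (σ i) (D i)
    · rw [if_pos hj, hpcoeff j, Finset.sum_eq_single i]
      · intro k _ hk
        rw [hcross i k _ hk hj, mul_zero]
      · intro hcon
        exact absurd (Finset.mem_univ i) hcon
    · rw [if_neg hj, hEwinout i j hj, mul_zero]
  have hVspan : V = Submodule.span ℂ (Set.range E) := by
    have h1 : Submodule.span ℂ (Set.range e) = (⊤ : Submodule ℂ V) := by
      rw [← hB]
      exact B.span_eq
    have h2 := congrArg (Submodule.map V.subtype) h1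
    rw [Submodule.map_span, Submodule.map_subtype_top] at h2
    rw [← h2]
    congr 1
    rw [← Set.range_comp]
    rfl
  rw [hVspan]
  apply le_antisymm
  · rw [Submodule.span_le]
    rintro _ ⟨i, rfl⟩
    have hEi : E i = (c i)⁻¹ • (∑ j ∈ Finset.Icc (σ i) (D i), monomial j (p.coeff j)) := by
      rw [hwinpart i, smul_smul, inv_mul_cancel₀ (hcne i), one_smul]
    rw [hEi]
    exact Submodule.smul_mem _ _ (Submodule.subset_span ⟨i, rfl⟩)
  · rw [Submodule.span_le]
    rintro _ ⟨i, rfl⟩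
    simp only
    rw [hwinpart i]
    exact Submodule.smul_mem _ _ (Submodule.subset_span ⟨i, rfl⟩)


/-- Uniqueness for special Schubert intersections (the Pieri-formula statement).
Let `N ≥ 1` and let `d_1, …, d_N, d` (encoded as `D : Fin (N+1) → ℕ` with
`D (last) = d`) and `ρ_1, …, ρ_N` (encoded as `ρ : Fin N → ℕ`) satisfy the
interleaving `d_i < ρ_{N+1−i} ≤ d_{i+1}` for `1 ≤ i ≤ N` (with `d_{N+1} = d`), and
set `m = d + (d_1+⋯+d_N) − (ρ_1+⋯+ρ_N)`.  Then there is at most one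
`(N+1)`-dimensional subspace `V` of polynomials of degree at most `d` such that:
(i) the degrees of nonzero elements of `V` are exactly `{d_1, …, d_N, d}`;
(ii) the root multiplicities at `0` of nonzero elements of `V` are exactly
`{0, ρ_N, …, ρ_1}`; and (iii) `V` contains a nonzero polynomial whose root
multiplicity at `−1` is at least `m+N`. -/
theorem special_schubert_intersection_unique (N d : ℕ) (hN : 1 ≤ N)
    (D : Fin (N + 1) → ℕ) (hDlast : D (Fin.last N) = d)
    (ρ : Fin N → ℕ)
    (hinter : ∀ i : Fin N, D i.castSucc < ρ i.rev ∧ ρ i.rev ≤ D i.succ)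
    (m : ℕ)
    (hm : (m : ℤ) = (d : ℤ) + (∑ i : Fin N, (D i.castSucc : ℤ)) - ∑ i : Fin N, (ρ i : ℤ))
    (V₁ V₂ : Submodule ℂ (Polynomial ℂ))
    (h₁deg : V₁ ≤ Polynomial.degreeLE ℂ (d : WithBot ℕ))
    (h₁rank : Module.finrank ℂ V₁ = N + 1)
    (h₁dset : {k : ℕ | ∃ g ∈ V₁, g ≠ 0 ∧ g.natDegree = k} = Set.range D)
    (h₁ρset : {k : ℕ | ∃ g ∈ V₁, g ≠ 0 ∧ Polynomial.rootMultiplicity 0 g = k}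
      = insert 0 (Set.range ρ))
    (h₁p : ∃ p ∈ V₁, p ≠ 0 ∧ m + N ≤ Polynomial.rootMultiplicity (-1) p)
    (h₂deg : V₂ ≤ Polynomial.degreeLE ℂ (d : WithBot ℕ))
    (h₂rank : Module.finrank ℂ V₂ = N + 1)
    (h₂dset : {k : ℕ | ∃ g ∈ V₂, g ≠ 0 ∧ g.natDegree = k} = Set.range D)
    (h₂ρset : {k : ℕ | ∃ g ∈ V₂, g ≠ 0 ∧ Polynomial.rootMultiplicity 0 g = k}
      = insert 0 (Set.range ρ))
    (h₂p : ∃ p ∈ V₂, p ≠ 0 ∧ m + N ≤ Polynomial.rootMultiplicity (-1) p) :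
    V₁ = V₂ := by
  classical
  obtain ⟨p₁, hp₁V, hp₁0, hp₁m⟩ := h₁p
  obtain ⟨p₂, hp₂V, hp₂0, hp₂m⟩ := h₂p
  set σ : Fin (N + 1) → ℕ := Fin.cases 0 (fun i => ρ i.rev) with hσ
  have hσ0 : σ 0 = 0 := rfl
  have hσsucc : ∀ i : Fin N, σ i.succ = ρ i.rev := fun i => by simp [hσ]
  have hσD : ∀ i, σ i ≤ D i := by
    intro i
    induction i using Fin.cases with
    | zero => simp [hσ]
    | succ k => rw [hσsucc]; exact (hinter k).2
  have hDσsucc : ∀ i : Fin N, D i.castSucc < σ i.succ := fun i => by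
    rw [hσsucc]; exact (hinter i).1
  have Dmono : StrictMono D := by
    rw [Fin.strictMono_iff_lt_succ]
    intro i
    exact lt_of_lt_of_le (hDσsucc i) (hσD i.succ)
  have σmono : StrictMono σ := by
    rw [Fin.strictMono_iff_lt_succ]
    intro i
    exact lt_of_le_of_lt (hσD i.castSucc) (hDσsucc i)
  have hwin : ∀ i j : Fin (N + 1), i < j → D i < σ j := by
    intro i j hij
    have hijv : (i : ℕ) < (j : ℕ) := hij
    have hjN : (j : ℕ) ≤ N := Nat.lt_succ_iff.mp j.isLt
    set k : Fin N := ⟨(j : ℕ) - 1, by omega⟩ with hk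
    have hjk : j = k.succ := by
      ext
      simp [hk]
      omega
    have hik : i ≤ k.castSucc := by
      rw [Fin.le_def]
      simp [hk]
      omega
    calc D i ≤ D k.castSucc := Dmono.monotone hik
      _ < σ k.succ := hDσsucc k
      _ = σ j := by rw [← hjk]
  have hDd : ∀ i, D i ≤ d := by
    intro i
    rw [← hDlast]
    exact Dmono.monotone (Fin.le_last i)
  -- the sum identity
  have hsum : ∑ i : Fin (N + 1), (D i + 1 - σ i) = (m + N) + 1 := by
    have hσsum : (∑ i : Fin (N + 1), (σ i : ℤ)) = ∑ i : Fin N, (ρ i : ℤ) := by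
      rw [Fin.sum_univ_succ]
      simp only [hσ0, Nat.cast_zero, zero_add]
      rw [show (∑ i : Fin N, ((σ i.succ : ℤ))) = ∑ i : Fin N, ((ρ i.rev : ℤ)) from
        Finset.sum_congr rfl (fun i _ => by rw [hσsucc])]
      exact Fintype.sum_bijective Fin.rev Fin.rev_involutive.bijective _ _ (fun i => rfl)
    have hDsum : (∑ i : Fin (N + 1), (D i : ℤ)) = (∑ i : Fin N, (D i.castSucc : ℤ)) + d := by
      rw [Fin.sum_univ_castSucc, hDlast]
    have hz : ((∑ i : Fin (N + 1), (D i + 1 - σ i) : ℕ) : ℤ) = (m : ℤ) + N + 1 := by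
      push_cast
      rw [Finset.sum_congr rfl (fun i _ => show ((D i + 1 - σ i : ℕ) : ℤ)
        = (D i : ℤ) + 1 - (σ i : ℤ) by have := hσD i; push_cast; omega)]
      rw [Finset.sum_sub_distrib, Finset.sum_add_distrib, hσsum, hDsum]
      simp only [Finset.sum_const, Finset.card_univ, Fintype.card_fin, nsmul_eq_mul, mul_one]
      rw [hm]
      push_cast
      ring
    exact_mod_cast hz
  -- set conversions
  have hrangeσ : insert 0 (Set.range ρ) = Set.range σ := by
    ext x
    constructor
    · rintro (rfl | ⟨k, rfl⟩)
      · exact ⟨0, rfl⟩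
      · exact ⟨(k.rev).succ, by rw [hσsucc k.rev, Fin.rev_rev]⟩
    · rintro ⟨i, rfl⟩
      induction i using Fin.cases with
      | zero => exact Or.inl rfl
      | succ k => exact Or.inr ⟨k.rev, (hσsucc k).symm⟩
  have h₁d' : ∀ g ∈ V₁, g ≠ 0 → g.natDegree ∈ Set.range D := by
    intro g hg hg0
    rw [← h₁dset]
    exact ⟨g, hg, hg0, rfl⟩
  have h₂d' : ∀ g ∈ V₂, g ≠ 0 → g.natDegree ∈ Set.range D := by
    intro g hg hg0
    rw [← h₂dset]
    exact ⟨g, hg, hg0, rfl⟩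
  have h₁ρ' : ∀ g ∈ V₁, g ≠ 0 → g.natTrailingDegree ∈ Set.range σ := by
    intro g hg hg0
    rw [← hrangeσ, ← h₁ρset]
    exact ⟨g, hg, hg0, rootMultiplicity_eq_natTrailingDegree'⟩
  have h₂ρ' : ∀ g ∈ V₂, g ≠ 0 → g.natTrailingDegree ∈ Set.range σ := by
    intro g hg hg0
    rw [← hrangeσ, ← h₂ρset]
    exact ⟨g, hg, hg0, rootMultiplicity_eq_natTrailingDegree'⟩
  -- structure of both spaces
  have hV1 := space_structure N d D σ hσD hwin hDd Dmono σmono (m + N) hsum V₁ h₁deg h₁rank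
    h₁d' h₁ρ' p₁ hp₁V hp₁0 hp₁m
  have hV2 := space_structure N d D σ hσD hwin hDd Dmono σmono (m + N) hsum V₂ h₂deg h₂rank
    h₂d' h₂ρ' p₂ hp₂V hp₂0 hp₂m
  -- supports
  set S : Finset ℕ := Finset.univ.biUnion (fun i : Fin (N + 1) => Finset.Icc (σ i) (D i))
    with hS
  have hspan_supp : ∀ (q : Polynomial ℂ) (w : Fin (N + 1) → Polynomial ℂ),
      (∀ i j, (w i).coeff j ≠ 0 → j ∈ Finset.Icc (σ i) (D i)) →
      q ∈ Submodule.span ℂ (Set.range w) → ∀ j, q.coeff j ≠ 0 → j ∈ S := by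
    intro q w hw hq
    refine Submodule.span_induction ?_ ?_ ?_ ?_ hq
    · rintro x ⟨i, rfl⟩ j hj
      exact Finset.mem_biUnion.mpr ⟨i, Finset.mem_univ i, hw i j hj⟩
    · intro j hj
      simp at hj
    · intro x y _ _ hx hy j hj
      rw [coeff_add] at hj
      by_cases hxj : x.coeff j ≠ 0
      · exact hx j hxj
      · push_neg at hxj
        exact hy j (by intro h0; rw [hxj, h0, add_zero] at hj; exact hj rfl)
    · intro a x _ hx j hj
      rw [coeff_smul] at hj
      exact hx j (by intro h0; rw [h0, smul_zero] at hj; exact hj rfl)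
  have hwcoeff : ∀ (q : Polynomial ℂ) i j,
      ((∑ k ∈ Finset.Icc (σ i) (D i), monomial k (q.coeff k)).coeff j ≠ 0) →
      j ∈ Finset.Icc (σ i) (D i) := by
    intro q i j hj
    rw [coeff_winsum] at hj
    by_contra hcon
    rw [if_neg hcon] at hj
    exact hj rfl
  have hp₁S : ∀ j, p₁.coeff j ≠ 0 → j ∈ S := by
    intro j hj
    exact hspan_supp p₁ _ (fun i => hwcoeff p₁ i) (hV1 ▸ hp₁V) j hj
  have hp₂S : ∀ j, p₂.coeff j ≠ 0 → j ∈ S := by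
    intro j hj
    exact hspan_supp p₂ _ (fun i => hwcoeff p₂ i) (hV2 ▸ hp₂V) j hj
  have hScard : S.card ≤ m + N + 1 := by
    calc S.card ≤ ∑ i : Fin (N + 1), (Finset.Icc (σ i) (D i)).card := Finset.card_biUnion_le
      _ = ∑ i : Fin (N + 1), (D i + 1 - σ i) :=
          Finset.sum_congr rfl (fun i _ => by rw [Nat.card_Icc])
      _ = m + N + 1 := hsum
  -- proportionality of p₁ and p₂
  set t := p₁.natDegree with htdef
  have ht1 : p₁.coeff t ≠ 0 := by
    rw [htdef, coeff_natDegree]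
    exact leadingCoeff_ne_zero.mpr hp₁0
  have htS : t ∈ S := hp₁S t ht1
  have hdvd1 : (X - C (-1 : ℂ)) ^ (m + N) ∣ p₁ :=
    (pow_dvd_pow _ hp₁m).trans (pow_rootMultiplicity_dvd p₁ (-1))
  have hdvd2 : (X - C (-1 : ℂ)) ^ (m + N) ∣ p₂ :=
    (pow_dvd_pow _ hp₂m).trans (pow_rootMultiplicity_dvd p₂ (-1))
  set g : Polynomial ℂ := p₂.coeff t • p₁ - p₁.coeff t • p₂ with hgdef
  have hgzero : g = 0 := by
    by_contra hgne
    have hsupp : g.support ⊆ S.erase t := by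
      intro j hj
      rw [mem_support_iff] at hj
      have hj' : p₁.coeff j ≠ 0 ∨ p₂.coeff j ≠ 0 := by
        by_contra hcon
        push_neg at hcon
        rw [hgdef] at hj
        simp [coeff_sub, coeff_smul, hcon.1, hcon.2] at hj
      have hjS : j ∈ S := by
        rcases hj' with h | h
        · exact hp₁S j h
        · exact hp₂S j h
      have hjt : j ≠ t := by
        rintro rfl
        rw [hgdef] at hj
        simp only [coeff_sub, coeff_smul, smul_eq_mul] at hj
        rw [mul_comm] at hj
        simp at hj
      exact Finset.mem_erase.mpr ⟨hjt, hjS⟩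
    have hcard : g.support.card ≤ m + N := by
      calc g.support.card ≤ (S.erase t).card := Finset.card_le_card hsupp
        _ = S.card - 1 := Finset.card_erase_of_mem htS
        _ ≤ m + N := by omega
    have hdvdg : (X - C (-1 : ℂ)) ^ (m + N) ∣ g := by
      rw [hgdef]
      apply dvd_sub
      · rw [Polynomial.smul_eq_C_mul]
        exact hdvd1.mul_left _
      · rw [Polynomial.smul_eq_C_mul]
        exact hdvd2.mul_left _
    have hmle : m + N ≤ rootMultiplicity (-1) g := (le_rootMultiplicity_iff hgne).mpr hdvdg
    have := sparse_rootMultiplicity_lt (-1) (by norm_num) g.support.card g le_rfl hgne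
    omega
  have heq : p₂.coeff t • p₁ = p₁.coeff t • p₂ := sub_eq_zero.mp hgzero
  have hc2 : p₂.coeff t ≠ 0 := by
    intro h0
    rw [h0, zero_smul] at heq
    exact hp₂0 (by
      have := heq.symm
      rcases smul_eq_zero.mp this with h | h
      · exact absurd h ht1
      · exact h)
  set lam : ℂ := (p₁.coeff t)⁻¹ * p₂.coeff t with hlam
  have hlamne : lam ≠ 0 := mul_ne_zero (inv_ne_zero ht1) hc2
  have hp21 : p₂ = lam • p₁ := by
    calc p₂ = (p₁.coeff t)⁻¹ • (p₁.coeff t • p₂) := by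
          rw [smul_smul, inv_mul_cancel₀ ht1, one_smul]
      _ = (p₁.coeff t)⁻¹ • (p₂.coeff t • p₁) := by rw [heq]
      _ = lam • p₁ := by rw [smul_smul, hlam]
  -- conclude
  rw [hV1, hV2]
  have hw21 : ∀ i : Fin (N + 1),
      (∑ j ∈ Finset.Icc (σ i) (D i), monomial j (p₂.coeff j)) =
      lam • (∑ j ∈ Finset.Icc (σ i) (D i), monomial j (p₁.coeff j)) := by
    intro i
    rw [hp21, Finset.smul_sum]
    apply Finset.sum_congr rfl
    intro j _
    rw [coeff_smul, Polynomial.smul_monomial, smul_eq_mul]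
  apply le_antisymm
  · rw [Submodule.span_le]
    rintro _ ⟨i, rfl⟩
    have h2 : (∑ j ∈ Finset.Icc (σ i) (D i), monomial j (p₁.coeff j)) =
        lam⁻¹ • (∑ j ∈ Finset.Icc (σ i) (D i), monomial j (p₂.coeff j)) := by
      rw [hw21 i, smul_smul, inv_mul_cancel₀ hlamne, one_smul]
    simp only
    rw [h2]
    exact Submodule.smul_mem _ _ (Submodule.subset_span ⟨i, rfl⟩)
  · rw [Submodule.span_le]
    rintro _ ⟨i, rfl⟩
    simp only
    rw [hw21 i]
    exact Submodule.smul_mem _ _ (Submodule.subset_span ⟨i, rfl⟩)
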